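/- For each k ∈ {1,2}, the representation ρ_k of UT₃(𝔽₃) on ZMod 3 → ℂ is irreducible: every ℂ-linear subspace p of (ZMod 3 → ℂ) satisfying ρ_k(g)(v) ∈ p for all g ∈ UT₃(𝔽₃) and all v ∈ p is either the zero subspace or the whole space. -/

import Mathlib

open Matrix

/-- The upper unitriangular matrix g(a,b,c) over ZMod 3. -/
def gmat (a b c : ZMod 3) : Matrix (Fin 3) (Fin 3) (ZMod 3) :=
  !![1, a, b; 0, 1, c; 0, 0, 1]

lemma gmat_mul (a b c a' b' c' : ZMod 3) :
    gmat a b c * gmat a' b' c' = gmat (a + a') (b + b' + a * c') (c + c') := by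
  ext i j
  fin_cases i <;> fin_cases j <;>
    simp [gmat, Matrix.mul_apply, Fin.sum_univ_succ, Matrix.vecHead, Matrix.vecTail] <;> ring

lemma gmat_one : gmat 0 0 0 = 1 := by
  ext i j
  fin_cases i <;> fin_cases j <;> simp [gmat, Matrix.one_apply, Matrix.vecHead, Matrix.vecTail]

lemma gmat_mul_inv (a b c : ZMod 3) :
    gmat a b c * gmat (-a) (a * c - b) (-c) = 1 := by
  rw [gmat_mul, show a + -a = (0 : ZMod 3) by ring,
    show b + (a * c - b) + a * -c = (0 : ZMod 3) by ring,
    show c + -c = (0 : ZMod 3) by ring, gmat_one]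

lemma gmat_inv_mul (a b c : ZMod 3) :
    gmat (-a) (a * c - b) (-c) * gmat a b c = 1 := by
  rw [gmat_mul, show -a + a = (0 : ZMod 3) by ring,
    show a * c - b + b + -a * c = (0 : ZMod 3) by ring,
    show -c + c = (0 : ZMod 3) by ring, gmat_one]

/-- g(a,b,c) as a unit of the matrix ring. -/
def gUnit (a b c : ZMod 3) : (Matrix (Fin 3) (Fin 3) (ZMod 3))ˣ :=
  ⟨gmat a b c, gmat (-a) (a * c - b) (-c), gmat_mul_inv a b c, gmat_inv_mul a b c⟩

/-- The subgroup UT₃(𝔽₃) of upper unitriangular matrices. -/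
def UT3 : Subgroup (Matrix (Fin 3) (Fin 3) (ZMod 3))ˣ where
  carrier := {x | ∃ a b c : ZMod 3, (x : Matrix (Fin 3) (Fin 3) (ZMod 3)) = gmat a b c}
  one_mem' := ⟨0, 0, 0, by simpa using gmat_one.symm⟩
  mul_mem' := by
    rintro x y ⟨a, b, c, hx⟩ ⟨a', b', c', hy⟩
    exact ⟨a + a', b + b' + a * c', c + c', by rw [Units.val_mul, hx, hy, gmat_mul]⟩
  inv_mem' := by
    rintro x ⟨a, b, c, hx⟩
    refine ⟨-a, a * c - b, -c, ?_⟩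
    exact Units.inv_eq_of_mul_eq_one_right (by rw [hx, gmat_mul_inv])

/-- g(a,b,c) as an element of UT₃(𝔽₃). -/
def gU (a b c : ZMod 3) : UT3 := ⟨gUnit a b c, ⟨a, b, c, rfl⟩⟩

noncomputable def ω : ℂ := Complex.exp (2 * Real.pi * Complex.I / 3)


lemma hωprim : IsPrimitiveRoot ω 3 := by
  have := Complex.isPrimitiveRoot_exp 3 (by norm_num)
  convert this using 2
  simp [ω]

lemma hω3 : ω ^ 3 = 1 := hωprim.pow_eq_one

lemma hω4 : ω ^ 4 = ω := by
  rw [show (4:ℕ) = 3 + 1 from rfl, pow_succ, hω3, one_mul]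

lemma hωsum : 1 + ω + ω ^ 2 = 0 := by
  have h := hωprim.geom_sum_eq_zero (by norm_num)
  simpa [Finset.sum_range_succ] using h

/-- The linear map ρ_k(g(a,b,c)) acting on ZMod 3 → ℂ. -/
noncomputable def rhoMap (k : ℕ) (a b c : ZMod 3) : (ZMod 3 → ℂ) →ₗ[ℂ] (ZMod 3 → ℂ) where
  toFun φ := fun n => ω ^ ((k • (b + n * c)).val) * φ (n + a)
  map_add' φ ψ := by funext n; simp [mul_add]
  map_smul' r φ := by funext n; simp [smul_eq_mul]; ring

/-- For k ∈ {1,2}, the representation ρ_k of UT₃(𝔽₃) on ZMod 3 → ℂ is irreducible. -/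
theorem UT3_three_dim_rep_irreducible (k : ℕ) (hk : k = 1 ∨ k = 2)
    (p : Submodule ℂ (ZMod 3 → ℂ))
    (hp : ∀ a b c : ZMod 3, ∀ v ∈ p, rhoMap k a b c v ∈ p) :
    p = ⊥ ∨ p = ⊤ := by
  by_cases hb : p = ⊥
  · exact Or.inl hb
  right
  obtain ⟨v, hv, hv0⟩ := (Submodule.ne_bot_iff p).mp hb
  obtain ⟨m, hm⟩ : ∃ m, v m ≠ 0 := by
    by_contra h; push_neg at h; exact hv0 (funext h)
  have hsingle : (Pi.single m 1 : ZMod 3 → ℂ) ∈ p := by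
    have h1 := hp 0 0 1 v hv
    have h2 := hp 0 0 2 v hv
    set w : ZMod 3 → ℂ := v + ω ^ ((2 * (k:ZMod 3) * m).val) • rhoMap k 0 0 1 v
        + ω ^ (((k:ZMod 3) * m).val) • rhoMap k 0 0 2 v with hwdef
    have hw : w ∈ p := p.add_mem (p.add_mem hv (p.smul_mem _ h1)) (p.smul_mem _ h2)
    have hweq : w = (3 * v m) • (Pi.single m 1 : ZMod 3 → ℂ) := by
      funext n
      simp only [hwdef, rhoMap, LinearMap.coe_mk, AddHom.coe_mk, Pi.add_apply,
        Pi.smul_apply, smul_eq_mul, Pi.single_apply, zero_add, add_zero, mul_one,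
        nsmul_eq_mul]
      have htri : ∀ x : ZMod 3, x = 0 ∨ x = 1 ∨ x = 2 := by decide
      rcases hk with rfl | rfl <;> rcases htri n with rfl | rfl | rfl <;>
          rcases htri m with rfl | rfl | rfl <;>
        norm_num [show (0:ZMod 3).val = 0 from by decide, show (1:ZMod 3).val = 1 from by decide,
          show (2:ZMod 3).val = 2 from by decide, show (3:ZMod 3).val = 0 from by decide,
          show (4:ZMod 3).val = 1 from by decide, show (6:ZMod 3).val = 0 from by decide,
          show (8:ZMod 3).val = 2 from by decide,
          show (0:ZMod 3) ≠ 1 from by decide, show (0:ZMod 3) ≠ 2 from by decide,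
          show (1:ZMod 3) ≠ 0 from by decide, show (1:ZMod 3) ≠ 2 from by decide,
          show (2:ZMod 3) ≠ 0 from by decide, show (2:ZMod 3) ≠ 1 from by decide]
      all_goals try ring_nf
      all_goals try simp only [hω3, hω4, one_mul]
      all_goals try ring
      all_goals try linear_combination (v 0) * hωsum
      all_goals try linear_combination (v 1) * hωsum
      all_goals try linear_combination (v 2) * hωsum
    have h3 : (3 * v m) ≠ 0 := by simp [hm]
    have := p.smul_mem (3 * v m)⁻¹ hw
    rwa [hweq, smul_smul, inv_mul_cancel₀ h3, one_smul] at this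
  have ht : ∀ j : ZMod 3, (Pi.single j 1 : ZMod 3 → ℂ) ∈ p := by
    intro j
    have h := hp (m - j) 0 0 _ hsingle
    have heq : rhoMap k (m - j) 0 0 ((Pi.single m 1 : ZMod 3 → ℂ)) = (Pi.single j 1 : ZMod 3 → ℂ) := by
      funext n
      simp only [rhoMap, LinearMap.coe_mk, AddHom.coe_mk, mul_zero, add_zero,
        smul_zero, ZMod.val_zero, pow_zero, one_mul, Pi.single_apply]
      have hiff : n + (m - j) = m ↔ n = j := by
        constructor <;> intro h <;> linear_combination h
      simp only [hiff]
    rwa [heq] at h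
  rw [eq_top_iff]
  rintro φ -
  have hφ : φ = ∑ j : ZMod 3, φ j • (Pi.single j 1 : ZMod 3 → ℂ) := by
    funext n
    simp [Pi.single_apply]
  rw [hφ]
  exact Submodule.sum_mem _ fun j _ => p.smul_mem _ (ht j)
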